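/- Let A be an n×n real SPSD matrix with SPSD square root A^{1/2}, and let P̄ be an n×n orthogonal projector (P̄ = P̄ᵀ = P̄²). Then ‖A − A^{1/2}P̄A^{1/2}‖_F = ‖(I − P̄)A(I − P̄)‖_F ≤ ‖(I − P̄)A‖_F. -/

import Mathlib

open Matrix BigOperators

/-- The positive semidefinite square root of a positive semidefinite matrix
(the definition removed from Mathlib, restored with its old body). -/
noncomputable def Matrix.PosSemidef.sqrt {n 𝕜 : Type*} [Fintype n] [RCLike 𝕜] [PartialOrder 𝕜]
    [DecidableEq n] {A : Matrix n n 𝕜} (hA : A.PosSemidef) : Matrix n n 𝕜 :=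
  hA.1.eigenvectorUnitary.1 * diagonal ((↑) ∘ (√·) ∘ hA.1.eigenvalues) *
  (star hA.1.eigenvectorUnitary : Matrix n n 𝕜)

/-- `M = U * diagonal μ * Uᵀ` is a spectral (eigen)decomposition of the symmetric matrix `M`,
with orthogonal `U` and eigenvalues `μ` listed in nonincreasing order. -/
def IsSpectralDecomp {n : ℕ} (M U : Matrix (Fin n) (Fin n) ℝ) (μ : Fin n → ℝ) : Prop :=
  Uᵀ * U = 1 ∧ Antitone μ ∧ M = U * Matrix.diagonal μ * Uᵀ

/-- Truncation of a spectral decomposition to its `k` largest (first `k`) eigenvalues: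
the best rank-`k` approximation `M_(k)` associated with the decomposition `(U, μ)`. -/
noncomputable def trunc {n : ℕ} (k : ℕ) (U : Matrix (Fin n) (Fin n) ℝ) (μ : Fin n → ℝ) :
    Matrix (Fin n) (Fin n) ℝ :=
  U * Matrix.diagonal (fun i : Fin n => if (i : ℕ) < k then μ i else 0) * Uᵀ

/-- `f` is operator monotone on SPSD matrices: for all `m` and all `m × m` SPSD matrices
`B ⪰ C ⪰ 0`, one has `f(B) ⪰ f(C)`, where matrix functions are computed through (any)
spectral decomposition. -/
def OperatorMonotone (f : ℝ → ℝ) : Prop :=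
  ∀ (m : ℕ) (B C U V : Matrix (Fin m) (Fin m) ℝ) (β γ : Fin m → ℝ),
    IsSpectralDecomp B U β → IsSpectralDecomp C V γ →
    B.PosSemidef → C.PosSemidef → (B - C).PosSemidef →
    (U * Matrix.diagonal (f ∘ β) * Uᵀ - V * Matrix.diagonal (f ∘ γ) * Vᵀ).PosSemidef

/-- Squared Frobenius norm `‖M‖_F² = Σ_{i,j} M_{ij}²`. -/
noncomputable def frobSq {m l : ℕ} (M : Matrix (Fin m) (Fin l) ℝ) : ℝ :=
  ∑ i, ∑ j, (M i j) ^ 2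

/-- Frobenius norm. -/
noncomputable def frobNorm {m l : ℕ} (M : Matrix (Fin m) (Fin l) ℝ) : ℝ :=
  Real.sqrt (frobSq M)

/-- The eigenvalues of a Hermitian matrix listed in nonincreasing order:
`eigsDesc hM i` is the `(i+1)`-st largest eigenvalue of `M`. -/
noncomputable def eigsDesc {m : ℕ} {M : Matrix (Fin m) (Fin m) ℝ} (hM : M.IsHermitian) :
    Fin m → ℝ :=
  fun i => (hM.eigenvalues ∘ Tuple.sort hM.eigenvalues) i.rev

/-- The singular values of `M` in nonincreasing order: `svDesc M i` is the `(i+1)`-st largest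
singular value of `M`, i.e. the square root of the `(i+1)`-st largest eigenvalue of `MᴴM`. -/
noncomputable def svDesc {m l : ℕ} (M : Matrix (Fin m) (Fin l) ℝ) : Fin l → ℝ :=
  fun i => Real.sqrt (eigsDesc (Matrix.isHermitian_conjTranspose_mul_self M) i)

/-- Nuclear norm: the sum of the singular values. -/
noncomputable def nuclearNorm {m l : ℕ} (M : Matrix (Fin m) (Fin l) ℝ) : ℝ :=
  ∑ i, svDesc M i

/-- Operator (spectral) norm: the largest singular value. -/
noncomputable def opNorm {m l : ℕ} (M : Matrix (Fin m) (Fin l) ℝ) : ℝ :=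
  ⨆ i, svDesc M i

/-- `p`-th power of the Schatten `p`-norm: `‖M‖_(p)^p = Σᵢ σᵢ(M)^p`. -/
noncomputable def schattenPow {m l : ℕ} (p : ℝ) (M : Matrix (Fin m) (Fin l) ℝ) : ℝ :=
  ∑ i, svDesc M i ^ p

/-- Schatten `p`-norm: `‖M‖_(p) = (Σᵢ σᵢ(M)^p)^(1/p)`. -/
noncomputable def schattenNorm {m l : ℕ} (p : ℝ) (M : Matrix (Fin m) (Fin l) ℝ) : ℝ :=
  (schattenPow p M) ^ (1 / p)

/-- `P` is the orthogonal projection onto the column space of `M`. -/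
def IsOrthProjOnto {m l : ℕ} (P : Matrix (Fin m) (Fin m) ℝ) (M : Matrix (Fin m) (Fin l) ℝ) :
    Prop :=
  Pᵀ = P ∧ P * P = P ∧ P * M = M ∧ ∃ Y : Matrix (Fin l) (Fin m) ℝ, P = M * Y

lemma frobSq_eq_trace {m l : ℕ} (M : Matrix (Fin m) (Fin l) ℝ) :
    frobSq M = (Mᵀ * M).trace := by
  simp only [frobSq, Matrix.trace, Matrix.diag, Matrix.mul_apply, Matrix.transpose_apply, sq]
  exact Finset.sum_comm

lemma sqrt_mul_self_real {n : ℕ} {A : Matrix (Fin n) (Fin n) ℝ} (hA : A.PosSemidef) :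
    hA.sqrt * hA.sqrt = A := by
  have hU : (star hA.1.eigenvectorUnitary : Matrix (Fin n) (Fin n) ℝ) *
      (hA.1.eigenvectorUnitary : Matrix (Fin n) (Fin n) ℝ) = 1 :=
    Unitary.coe_star_mul_self _
  conv_rhs => rw [hA.1.spectral_theorem, Unitary.conjStarAlgAut_apply]
  unfold Matrix.PosSemidef.sqrt
  have e : ∀ (U V D : Matrix (Fin n) (Fin n) ℝ), V * U = 1 →
      U * D * V * (U * D * V) = U * (D * D) * V := by
    intro U V D h
    calc U * D * V * (U * D * V) = U * D * (V * U) * D * V := by simp only [mul_assoc]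
      _ = U * (D * D) * V := by rw [h]; simp only [mul_one, mul_assoc]
  rw [e _ _ _ hU, diagonal_mul_diagonal]
  congr 2
  congr 1
  funext i
  simp only [Function.comp_apply, RCLike.ofReal_real_eq_id, id]
  exact Real.mul_self_sqrt (hA.eigenvalues_nonneg i)

lemma sqrt_isHermitian_real {n : ℕ} {A : Matrix (Fin n) (Fin n) ℝ} (hA : A.PosSemidef) :
    hA.sqrt.IsHermitian := by
  unfold Matrix.PosSemidef.sqrt Matrix.IsHermitian
  simp only [Matrix.conjTranspose_eq_transpose_of_trivial, Matrix.transpose_mul,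
    Matrix.star_eq_conjTranspose, Matrix.transpose_transpose, Matrix.diagonal_transpose, mul_assoc]

lemma frobSq_nonneg {m l : ℕ} (M : Matrix (Fin m) (Fin l) ℝ) : 0 ≤ frobSq M := by
  apply Finset.sum_nonneg; intro i _; apply Finset.sum_nonneg; intro j _; positivity

/-- For SPSD `A` and an orthogonal projector `P̄`,
`‖A − A^{1/2}P̄A^{1/2}‖_F = ‖(I − P̄)A(I − P̄)‖_F ≤ ‖(I − P̄)A‖_F`. -/
theorem symmetric_compression_error
    (n : ℕ) (A Pbar : Matrix (Fin n) (Fin n) ℝ) (hA : A.PosSemidef)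
    (hPbarSymm : Pbarᵀ = Pbar) (hPbarIdem : Pbar * Pbar = Pbar) :
    frobNorm (A - hA.sqrt * Pbar * hA.sqrt) = frobNorm ((1 - Pbar) * A * (1 - Pbar)) ∧
    frobNorm ((1 - Pbar) * A * (1 - Pbar)) ≤ frobNorm ((1 - Pbar) * A) := by
  set S := hA.sqrt with hSdef
  have hSS : S * S = A := sqrt_mul_self_real hA
  have hST : Sᵀ = S := by
    have h := sqrt_isHermitian_real hA
    simpa [Matrix.IsHermitian, Matrix.conjTranspose_eq_transpose_of_trivial] using h
  have hAT : Aᵀ = A := by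
    have h := hA.isHermitian
    simpa [Matrix.IsHermitian, Matrix.conjTranspose_eq_transpose_of_trivial] using h
  set Q : Matrix (Fin n) (Fin n) ℝ := 1 - Pbar with hQdef
  have hQT : Qᵀ = Q := by simp [hQdef, Matrix.transpose_sub, hPbarSymm]
  have hQQ : Q * Q = Q := by
    simp only [hQdef, mul_sub, sub_mul, mul_one, one_mul, hPbarIdem]
    abel
  have hdecomp : A - S * Pbar * S = S * Q * S := by
    simp only [hQdef, mul_sub, sub_mul, mul_one, one_mul, hSS]
  -- trace computations
  have t1 : frobSq (S * Q * S) = (A * Q * A * Q).trace := by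
    rw [frobSq_eq_trace]
    have htr : (S * Q * S)ᵀ = S * Q * S := by
      simp [Matrix.transpose_mul, hST, hQT, mul_assoc]
    rw [htr]
    have e1 : S * Q * S * (S * Q * S) = S * (Q * A * Q * S) := by
      rw [← hSS]; noncomm_ring
    rw [e1, Matrix.trace_mul_comm]
    have e2 : Q * A * Q * S * S = Q * (A * Q * A) := by
      rw [← hSS]; noncomm_ring
    rw [e2, Matrix.trace_mul_comm]
  have t2 : frobSq (Q * A * Q) = (A * Q * A * Q).trace := by
    rw [frobSq_eq_trace]
    have htr : (Q * A * Q)ᵀ = Q * A * Q := by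
      simp [Matrix.transpose_mul, hAT, hQT, mul_assoc]
    rw [htr]
    have e1 : Q * A * Q * (Q * A * Q) = Q * (A * Q * A * Q) := by
      have : Q * A * Q * (Q * A * Q) = Q * A * (Q * Q) * A * Q := by noncomm_ring
      rw [this, hQQ]; noncomm_ring
    rw [e1, Matrix.trace_mul_comm]
    have e2 : A * Q * A * Q * Q = A * Q * A * Q := by
      rw [mul_assoc, hQQ]
    rw [e2]
  have t3 : frobSq (Q * A) = (A * Q * A).trace := by
    rw [frobSq_eq_trace]
    have htr : (Q * A)ᵀ = A * Q := by simp [Matrix.transpose_mul, hAT, hQT]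
    rw [htr]
    have e1 : A * Q * (Q * A) = A * (Q * A) := by
      have : A * Q * (Q * A) = A * (Q * Q) * A := by noncomm_ring
      rw [this, hQQ]; noncomm_ring
    rw [e1, ← mul_assoc]
  have t4 : frobSq (Q * A * Pbar) = (A * Q * A).trace - (A * Q * A * Q).trace := by
    rw [frobSq_eq_trace]
    have htr : (Q * A * Pbar)ᵀ = Pbar * A * Q := by
      simp [Matrix.transpose_mul, hAT, hQT, hPbarSymm, mul_assoc]
    rw [htr]
    have e1 : Pbar * A * Q * (Q * A * Pbar) = Pbar * (A * Q * A * Pbar) := by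
      have : Pbar * A * Q * (Q * A * Pbar) = Pbar * (A * (Q * Q) * A * Pbar) := by noncomm_ring
      rw [this, hQQ]
    rw [e1, Matrix.trace_mul_comm]
    have e2 : A * Q * A * Pbar * Pbar = A * Q * A * Pbar := by
      rw [mul_assoc, hPbarIdem]
    rw [e2]
    have e3 : A * Q * A * Pbar = A * Q * A - A * Q * A * Q := by
      simp only [hQdef, mul_sub, mul_one]
      abel
    rw [e3, Matrix.trace_sub]
  constructor
  · unfold frobNorm
    rw [hdecomp, t1, ← t2]
  · unfold frobNorm
    apply Real.sqrt_le_sqrt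
    have h4 := frobSq_nonneg (Q * A * Pbar)
    rw [t4] at h4
    rw [t2, t3]
    linarith
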